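/- Let E and F be complex Hilbert spaces and let T : E →ₗ.[ℂ] F be a densely defined closed unbounded operator with Hilbert adjoint T†, and assume the range of T is a closed subspace of F. Then the domain of T† admits the description dom T† = { Tf + w : f ∈ dom T with Tf ∈ dom T†, and w ∈ ker T† }, and for any such decomposition v = Tf + w one has T†v = T†(Tf). -/
import Mathlib

namespace DiracFractal

open scoped ComplexConjugate

local notation "⟪" x ", " y "⟫" => @inner ℂ _ _ x y

section Aux
set_option linter.unusedSectionVars false

variable {E F : Type*}
    [NormedAddCommGroup E] [InnerProductSpace ℂ E] [CompleteSpace E]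
    [NormedAddCommGroup F] [InnerProductSpace ℂ F] [CompleteSpace F]

/-- An element orthogonal to the range of `T` lies in the domain of the adjoint. -/
lemma mem_adjoint_domain_of_orthogonal (T : E →ₗ.[ℂ] F) (w : F)
    (hw : ∀ x : T.domain, ⟪w, T x⟫ = 0) : w ∈ T.adjoint.domain := by
  show Continuous ((innerₛₗ ℂ w).comp T.toFun)
  have : ((innerₛₗ ℂ w).comp T.toFun) = 0 := by
    ext x; exact hw x
  rw [this]
  exact continuous_zero

lemma adjoint_eq_zero_of_orthogonal (T : E →ₗ.[ℂ] F) (hd : Dense (T.domain : Set E))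
    (w : F) (hw : ∀ x : T.domain, ⟪w, T x⟫ = 0)
    (hw' : w ∈ T.adjoint.domain) : T.adjoint ⟨w, hw'⟩ = 0 := by
  refine LinearPMap.adjoint_apply_eq hd ⟨w, hw'⟩ (fun x => ?_)
  rw [hw x, inner_zero_left]

end Aux

/-- Corollary of Section 2 of Hinz–Teplyaev, abstract form.
Let `T : E →ₗ.[ℂ] F` be a densely defined closed operator between complex Hilbert spaces
with closed range.  Then
`dom T† = { T f + w : f ∈ dom T with T f ∈ dom T†, w ∈ ker T† }`, and for any such
decomposition `v = T f + w` one has `T† v = T† (T f)`. -/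
theorem adjoint_domain_eq_range_add_ker
    {E F : Type*}
    [NormedAddCommGroup E] [InnerProductSpace ℂ E] [CompleteSpace E]
    [NormedAddCommGroup F] [InnerProductSpace ℂ F] [CompleteSpace F]
    (T : E →ₗ.[ℂ] F) (hd : Dense (T.domain : Set E)) (hc : T.IsClosed)
    (hran : IsClosed (Set.range fun x : T.domain => T x)) :
    ((T.adjoint.domain : Submodule ℂ F) : Set F) =
      {v : F | ∃ (f : E) (hf : f ∈ T.domain), T ⟨f, hf⟩ ∈ T.adjoint.domain ∧
        ∃ (w : F) (hw : w ∈ T.adjoint.domain),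
          T.adjoint ⟨w, hw⟩ = 0 ∧ v = T ⟨f, hf⟩ + w} ∧
      ∀ (f : E) (hf : f ∈ T.domain) (hTf : T ⟨f, hf⟩ ∈ T.adjoint.domain)
        (w : F) (hw : w ∈ T.adjoint.domain), T.adjoint ⟨w, hw⟩ = 0 →
          ∀ hv : T ⟨f, hf⟩ + w ∈ T.adjoint.domain,
            T.adjoint ⟨T ⟨f, hf⟩ + w, hv⟩ = T.adjoint ⟨T ⟨f, hf⟩, hTf⟩ := by
  -- the range of T as a submodule
  set R : Submodule ℂ F := LinearMap.range T.toFun with hR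
  have hRset : (R : Set F) = Set.range fun x : T.domain => T x := by
    ext y; simp [hR, LinearMap.mem_range]
  have hRclosed : IsClosed (R : Set F) := hRset ▸ hran
  haveI : CompleteSpace R := hRclosed.completeSpace_coe
  constructor
  · ext v
    constructor
    · intro hv
      -- decompose v along R ⊕ Rᗮ
      obtain ⟨r, hrR, w, hwO, hvrw⟩ := R.exists_add_mem_mem_orthogonal v
      obtain ⟨x, hx⟩ := hrR
      -- w is orthogonal to the range of T
      have hw0 : ∀ x : T.domain, ⟪w, T x⟫ = 0 := by
        intro x
        have := (Submodule.mem_orthogonal R w).mp hwO (T x) (LinearMap.mem_range_self _ x)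
        rw [← inner_conj_symm, this, map_zero]
      have hwdom : w ∈ T.adjoint.domain := mem_adjoint_domain_of_orthogonal T w hw0
      have hwzero : T.adjoint ⟨w, hwdom⟩ = 0 :=
        adjoint_eq_zero_of_orthogonal T hd w hw0 hwdom
      have hrdom : r ∈ T.adjoint.domain := by
        have : r = v - w := by rw [hvrw, add_sub_cancel_right]
        rw [this]
        exact sub_mem hv hwdom
      refine ⟨x, x.2, ?_, w, hwdom, hwzero, ?_⟩
      · have : T ⟨(x : E), x.2⟩ = r := by rw [← hx]; rfl
        rw [this]; exact hrdom
      · have : T ⟨(x : E), x.2⟩ = r := by rw [← hx]; rfl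
        rw [this, hvrw]
    · rintro ⟨f, hf, hTf, w, hw, -, rfl⟩
      exact add_mem hTf hw
  · intro f hf hTf w hw hwzero hv
    have key : (⟨T ⟨f, hf⟩ + w, hv⟩ : T.adjoint.domain)
        = ⟨T ⟨f, hf⟩, hTf⟩ + ⟨w, hw⟩ := rfl
    rw [key, T.adjoint.map_add, hwzero, add_zero]

end DiracFractal
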